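/- With the same data as in the previous statement (p ∈ (0, 2-√3), c > 0, A_n = c((1-p²)n - β)p^n with β = (1 + 5p² ± √(1-14p²+p⁴))/2, and ω = (c²/12)·(1+p² ± √(1-14p²+p⁴))/(1-p²)), it holds that Σ_{n=0}^∞ (n+1)²·A_n² = 6ω. -/
import Mathlib

lemma descR (k n : ℕ) : (((n + k).choose k : ℝ)) * (k.factorial : ℝ) = ((n + k).descFactorial k : ℝ) := by
  have h := Nat.descFactorial_eq_factorial_mul_choose (n + k) k
  have : (n + k).choose k * k.factorial = (n + k).descFactorial k := by rw [h]; ring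
  exact_mod_cast this

/-- For the same pair of stationary states as in the previous statement,
`E(A) = Σ (n+1)² A_n² = 6ω`. -/
theorem stmt15 (p c s : ℝ) (hp0 : 0 < p) (hp1 : p < 2 - Real.sqrt 3) (hc : 0 < c)
    (hs : s = 1 ∨ s = -1) :
    HasSum (fun n : ℕ => ((n : ℝ) + 1) ^ 2 *
        (c * ((1 - p ^ 2) * n -
          (1 + 5 * p ^ 2 + s * Real.sqrt (1 - 14 * p ^ 2 + p ^ 4)) / 2) * p ^ n) ^ 2)
      (6 * (c ^ 2 / 12 *
        ((1 + p ^ 2 + s * Real.sqrt (1 - 14 * p ^ 2 + p ^ 4)) / (1 - p ^ 2)))) := by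
  have hs3 : Real.sqrt 3 ^ 2 = 3 := Real.sq_sqrt (by norm_num)
  have h3lt : Real.sqrt 3 < 2 := by nlinarith [Real.sqrt_nonneg 3]
  have h3gt : 1 < Real.sqrt 3 := by nlinarith [Real.sqrt_nonneg 3]
  have hp_lt1 : p < 1 := by linarith
  have hq1 : p ^ 2 < 1 := by nlinarith
  have h74 : p ^ 2 < 7 - 4 * Real.sqrt 3 := by nlinarith
  have hnn : 0 ≤ 1 - 14 * p ^ 2 + p ^ 4 := by
    have key : (0:ℝ) ≤ (7 - 4 * Real.sqrt 3 - p ^ 2) * (7 + 4 * Real.sqrt 3 - p ^ 2) :=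
      mul_nonneg (by linarith) (by nlinarith)
    nlinarith [key]
  have hs2 : s ^ 2 = 1 := by rcases hs with h | h <;> rw [h] <;> norm_num
  obtain ⟨y, hydef⟩ : ∃ y, Real.sqrt (1 - 14 * p ^ 2 + p ^ 4) = y := ⟨_, rfl⟩
  have hy2 : y ^ 2 = 1 - 14 * p ^ 2 + p ^ 4 := by rw [← hydef]; exact Real.sq_sqrt hnn
  rw [hydef]
  obtain ⟨b, hbdef⟩ : ∃ b, (1 + 5 * p ^ 2 + s * y) / 2 = b := ⟨_, rfl⟩
  rw [hbdef]
  have hb : b ^ 2 = (1 + 5 * p ^ 2) * b - 6 * p ^ 2 * (1 + p ^ 2) := by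
    rw [← hbdef]
    linear_combination (y ^ 2 / 4) * hs2 + (1 / 4) * hy2
  obtain ⟨a, hadef⟩ : ∃ a, 1 - p ^ 2 = a := ⟨_, rfl⟩
  rw [hadef]
  have ha : 0 < a := by rw [← hadef]; linarith
  have hq : ‖(p ^ 2 : ℝ)‖ < 1 := by
    rw [Real.norm_eq_abs, abs_of_pos (by positivity)]; exact hq1
  have H4 := (hasSum_choose_mul_geometric_of_norm_lt_one 4 hq).mul_left (c ^ 2 * (24 * a ^ 2))
  have H3 := (hasSum_choose_mul_geometric_of_norm_lt_one 3 hq).mul_left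
    (c ^ 2 * (-48 * a ^ 2 - 12 * a * b))
  have H2 := (hasSum_choose_mul_geometric_of_norm_lt_one 2 hq).mul_left
    (c ^ 2 * (28 * a ^ 2 + 16 * a * b + 2 * b ^ 2))
  have H1 := (hasSum_choose_mul_geometric_of_norm_lt_one 1 hq).mul_left
    (c ^ 2 * (-4 * a ^ 2 - 4 * a * b - b ^ 2))
  rw [hadef] at H4 H3 H2 H1
  have Htot := ((H4.add H3).add H2).add H1
  have hfun : (fun n : ℕ => ((n : ℝ) + 1) ^ 2 * (c * (a * n - b) * p ^ n) ^ 2) =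
      (fun n : ℕ =>
        ((c ^ 2 * (24 * a ^ 2) * (((n + 4).choose 4 : ℝ) * (p ^ 2) ^ n) +
          c ^ 2 * (-48 * a ^ 2 - 12 * a * b) * (((n + 3).choose 3 : ℝ) * (p ^ 2) ^ n)) +
          c ^ 2 * (28 * a ^ 2 + 16 * a * b + 2 * b ^ 2) * (((n + 2).choose 2 : ℝ) * (p ^ 2) ^ n)) +
          c ^ 2 * (-4 * a ^ 2 - 4 * a * b - b ^ 2) * (((n + 1).choose 1 : ℝ) * (p ^ 2) ^ n)) := by
    funext n
    have e4 := descR 4 n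
    have e3 := descR 3 n
    have e2 := descR 2 n
    have e1 := descR 1 n
    simp only [Nat.descFactorial_succ, Nat.descFactorial_zero, Nat.factorial] at e4 e3 e2 e1
    push_cast at e4 e3 e2 e1
    have hpn : (c * (a * (n:ℝ) - b) * p ^ n) ^ 2 = (c * (a * n - b)) ^ 2 * (p ^ 2) ^ n := by
      rw [mul_pow, ← pow_mul, ← pow_mul, Nat.mul_comm]
    rw [hpn]
    linear_combination (-((p ^ 2) ^ n * c ^ 2 * a ^ 2)) * e4 +
      (-((p ^ 2) ^ n * c ^ 2 * (-8 * a ^ 2 - 2 * a * b))) * e3 +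
      (-((p ^ 2) ^ n * c ^ 2 * (14 * a ^ 2 + 8 * a * b + b ^ 2))) * e2 +
      (-((p ^ 2) ^ n * c ^ 2 * (-4 * a ^ 2 - 4 * a * b - b ^ 2))) * e1
  have hT : 6 * (c ^ 2 / 12 * ((1 + p ^ 2 + s * y) / a)) =
      ((c ^ 2 * (24 * a ^ 2) * (1 / a ^ (4 + 1)) +
        c ^ 2 * (-48 * a ^ 2 - 12 * a * b) * (1 / a ^ (3 + 1))) +
        c ^ 2 * (28 * a ^ 2 + 16 * a * b + 2 * b ^ 2) * (1 / a ^ (2 + 1))) +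
        c ^ 2 * (-4 * a ^ 2 - 4 * a * b - b ^ 2) * (1 / a ^ (1 + 1)) := by
    have ha' : a ≠ 0 := ne_of_gt ha
    have hsy : s * y = 2 * b - (1 + 5 * p ^ 2) := by linear_combination 2 * hbdef
    rw [hsy, ← hadef, hb]
    have h1p : (1 - p ^ 2) ≠ 0 := by rw [hadef]; exact ha'
    field_simp
    ring
  rw [hfun, hT]
  exact Htot
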